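/- arXiv:1610.06320 — 6 statements merged into one kernel-verified Lean document; each statement's English description precedes it below -/
import Mathlib

section
/- There exists a constant c ≥ 1 depending only on p such that for all δ ≥ 0 and all t ≥ 0 one has φ(t) ≤ φ'(t)·t ≤ c·φ(t); in particular the equivalence φ'(t)·t ∼ φ(t) holds uniformly in t and δ. -/
open intervalIntegral

private lemma rew_aux (p : ℝ) {a : ℝ} (ha : 0 < a) (s : ℝ) :
    a ^ (p - 2) * s = a ^ (p - 1) * (s / a) := by
  rw [show p - 2 = (p - 1) - 1 by ring, Real.rpow_sub ha, Real.rpow_one]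
  field_simp

private lemma key_mono (p : ℝ) (hp : 1 < p) (δ : ℝ) (hδ : 0 ≤ δ) {s u : ℝ}
    (hs : 0 ≤ s) (hsu : s ≤ u) :
    (δ + s) ^ (p - 2) * s ≤ (δ + u) ^ (p - 2) * u := by
  rcases eq_or_lt_of_le hs with h0 | h0
  · rw [← h0, mul_zero]
    have hu : 0 ≤ u := le_trans hs hsu
    positivity
  · have ha : 0 < δ + s := by linarith
    have hb : 0 < δ + u := by linarith
    rw [rew_aux p ha, rew_aux p hb]
    have h1 : (δ + s) ^ (p - 1) ≤ (δ + u) ^ (p - 1) :=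
      Real.rpow_le_rpow ha.le (by linarith) (by linarith)
    have h2 : s / (δ + s) ≤ u / (δ + u) := by
      rw [div_le_div_iff₀ ha hb]
      nlinarith
    have h3 : 0 ≤ s / (δ + s) := by positivity
    have h4 : 0 ≤ (δ + u) ^ (p - 1) := by positivity
    exact mul_le_mul h1 h2 h3 h4

private lemma key_double (p : ℝ) (hp : 1 < p) (δ : ℝ) (hδ : 0 ≤ δ) {t : ℝ} (ht : 0 ≤ t) :
    (δ + t) ^ (p - 2) * t ≤ 2 ^ p * ((δ + t / 2) ^ (p - 2) * (t / 2)) := by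
  rcases eq_or_lt_of_le ht with h0 | h0
  · rw [← h0]; norm_num
  · have hm : 0 < δ + t / 2 := by linarith
    have hb : 0 < δ + t := by linarith
    rw [rew_aux p hb, rew_aux p hm]
    have hA : (δ + t) ^ (p - 1) ≤ 2 ^ (p - 1) * (δ + t / 2) ^ (p - 1) := by
      rw [← Real.mul_rpow (by norm_num) hm.le]
      exact Real.rpow_le_rpow hb.le (by linarith) (by linarith)
    have hB : t / (δ + t) ≤ t / (δ + t / 2) := by
      apply div_le_div_of_nonneg_left h0.le hm (by linarith)
    have h2p : (2 : ℝ) ^ p = 2 ^ (p - 1) * 2 := by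
      rw [← Real.rpow_add_one (by norm_num : (2:ℝ) ≠ 0) (p - 1)]
      norm_num
    have hchain : (δ + t) ^ (p - 1) * (t / (δ + t)) ≤
        (2 ^ (p - 1) * (δ + t / 2) ^ (p - 1)) * (t / (δ + t / 2)) := by
      apply mul_le_mul hA hB (by positivity) (by positivity)
    refine hchain.trans (le_of_eq ?_)
    rw [h2p]
    field_simp

/-- For `φ(t) = ∫₀ᵗ (δ+s)^(p-2) * s ds` and `φ'(t) = (δ+t)^(p-2) * t` (real powers,
with `x^r = 0` for `x = 0`, `r < 0`), there is a constant `c ≥ 1` depending only on `p`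
such that `φ(t) ≤ φ'(t) * t ≤ c * φ(t)` for all `δ ≥ 0` and all `t ≥ 0`;
i.e. `φ'(t) * t ∼ φ(t)` uniformly in `t` and `δ`. -/
theorem stmt1 (p : ℝ) (hp : 1 < p) :
    ∃ c : ℝ, 1 ≤ c ∧ ∀ δ : ℝ, 0 ≤ δ → ∀ t : ℝ, 0 ≤ t →
      (∫ s in (0:ℝ)..t, (δ + s) ^ (p - 2) * s) ≤ ((δ + t) ^ (p - 2) * t) * t ∧
      ((δ + t) ^ (p - 2) * t) * t ≤ c * ∫ s in (0:ℝ)..t, (δ + s) ^ (p - 2) * s := by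
  refine ⟨2 ^ (p + 1), ?_, ?_⟩
  · have : (2:ℝ) ^ (0:ℝ) ≤ 2 ^ (p + 1) :=
      Real.rpow_le_rpow_of_exponent_le (by norm_num) (by linarith)
    simpa using this
  intro δ hδ t ht
  set f : ℝ → ℝ := fun s => (δ + s) ^ (p - 2) * s with hf
  have hmono : MonotoneOn f (Set.uIcc 0 t) := by
    rw [Set.uIcc_of_le ht]
    intro x hx y hy hxy
    exact key_mono p hp δ hδ hx.1 hxy
  have hint : IntervalIntegrable f MeasureTheory.volume 0 t :=
    hmono.intervalIntegrable
  have hmono2 : MonotoneOn f (Set.uIcc (t/2) t) := by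
    apply hmono.mono
    apply Set.uIcc_subset_uIcc <;> rw [Set.uIcc_of_le ht] <;>
      constructor <;> linarith
  have hint2 : IntervalIntegrable f MeasureTheory.volume (t/2) t :=
    hmono2.intervalIntegrable
  have hint1 : IntervalIntegrable f MeasureTheory.volume 0 (t/2) := by
    apply hint.mono_set
    apply Set.uIcc_subset_uIcc <;> rw [Set.uIcc_of_le ht] <;>
      constructor <;> linarith
  constructor
  · have h1 : ∫ s in (0:ℝ)..t, f s ≤ ∫ _ in (0:ℝ)..t, f t := by
      apply intervalIntegral.integral_mono_on ht hint intervalIntegrable_const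
      intro x hx
      exact key_mono p hp δ hδ hx.1 hx.2
    have h2 : (∫ _ in (0:ℝ)..t, f t) = f t * t := by
      rw [intervalIntegral.integral_const, smul_eq_mul]; ring
    calc ∫ s in (0:ℝ)..t, f s ≤ f t * t := h2 ▸ h1
      _ = ((δ + t) ^ (p - 2) * t) * t := rfl
  · have hnn : ∀ x ∈ Set.Icc (0:ℝ) t, 0 ≤ f x := by
      intro x hx
      have := hx.1
      simp only [hf]
      positivity
    have h1 : (0:ℝ) ≤ ∫ s in (0:ℝ)..(t/2), f s := by
      apply intervalIntegral.integral_nonneg (by linarith)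
      intro x hx
      exact hnn x ⟨hx.1, by linarith [hx.2]⟩
    have h2 : f (t/2) * (t/2) ≤ ∫ s in (t/2)..t, f s := by
      have : (∫ _ in (t/2)..t, f (t/2)) ≤ ∫ s in (t/2)..t, f s := by
        apply intervalIntegral.integral_mono_on (by linarith)
          intervalIntegrable_const hint2
        intro x hx
        exact key_mono p hp δ hδ (by linarith [hx.1]) hx.1
      rw [intervalIntegral.integral_const, smul_eq_mul] at this
      calc f (t/2) * (t/2) = (t - t/2) * f (t/2) := by ring
        _ ≤ ∫ s in (t/2)..t, f s := this
    have hsplit : (∫ s in (0:ℝ)..(t/2), f s) + ∫ s in (t/2)..t, f s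
        = ∫ s in (0:ℝ)..t, f s :=
      intervalIntegral.integral_add_adjacent_intervals hint1 hint2
    have h3 : f (t/2) * (t/2) ≤ ∫ s in (0:ℝ)..t, f s := by
      rw [← hsplit]; linarith
    have h4 : f t ≤ 2 ^ p * f (t/2) := key_double p hp δ hδ ht
    have h5 : f t * t ≤ 2 ^ p * f (t/2) * t :=
      mul_le_mul_of_nonneg_right h4 ht
    have h2p : (2:ℝ) ^ (p + 1) = 2 ^ p * 2 :=
      Real.rpow_add_one (by norm_num) p
    have h6 : 2 ^ p * f (t/2) * t = 2 ^ (p+1) * (f (t/2) * (t/2)) := by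
      rw [h2p]; ring
    have h7 : 2 ^ (p+1) * (f (t/2) * (t/2)) ≤ 2 ^ (p+1) * ∫ s in (0:ℝ)..t, f s := by
      apply mul_le_mul_of_nonneg_left h3 (by positivity)
    calc ((δ + t) ^ (p - 2) * t) * t = f t * t := rfl
      _ ≤ 2 ^ p * f (t/2) * t := h5
      _ = 2 ^ (p+1) * (f (t/2) * (t/2)) := h6
      _ ≤ 2 ^ (p+1) * ∫ s in (0:ℝ)..t, f s := h7
end

section
/- For all p > 1, all δ ≥ 0 and all t ≥ 0 one has φ(2t) ≤ 2^{max{2,p}}·φ(t); i.e., φ satisfies the Δ₂-condition with a constant depending only on p, uniformly in δ. -/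
open Real intervalIntegral

lemma aux_integrable (p δ a : ℝ) (hp : 1 < p) (hδ : 0 ≤ δ) (ha : 0 ≤ a) :
    IntervalIntegrable (fun s => (δ + s) ^ (p - 2) * s) MeasureTheory.volume 0 a := by
  rcases hδ.eq_or_lt with h | h
  · -- δ = 0 : function equals s ^ (p-1) on [0,a]
    have hc : Continuous (fun s : ℝ => s ^ (p - 1)) := by
      refine continuous_iff_continuousAt.2 fun x => ?_
      exact Real.continuousAt_rpow_const x (p - 1) (Or.inr (by linarith))
    have := hc.intervalIntegrable (μ := MeasureTheory.volume) (a := 0) (b := a)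
    refine this.congr ?_
    refine fun s hs => ?_
    rw [Set.uIoc_of_le ha] at hs
    subst h
    show s ^ (p-1) = (0 + s) ^ (p - 2) * s
    rw [zero_add, show p - 1 = p - 2 + 1 by ring, Real.rpow_add_one (ne_of_gt hs.1)]
  · -- δ > 0 : continuous
    have hc : ContinuousOn (fun s => (δ + s) ^ (p - 2) * s) (Set.uIcc 0 a) := by
      apply ContinuousOn.mul ?_ continuousOn_id
      apply ContinuousOn.rpow_const (Continuous.continuousOn (by continuity))
      intro x hx
      rw [Set.uIcc_of_le ha] at hx
      exact Or.inl (by nlinarith [hx.1])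
    exact hc.intervalIntegrable


/-- For `φ(t) = ∫₀ᵗ (δ+s)^(p-2) * s ds` (real powers, with `x^r = 0` for `x = 0`, `r < 0`),
one has `φ(2t) ≤ 2^(max 2 p) * φ(t)` for all `p > 1`, `δ ≥ 0` and `t ≥ 0`:
the `Δ₂`-condition with a constant depending only on `p`, uniformly in `δ`. -/
theorem stmt2 (p δ t : ℝ) (hp : 1 < p) (hδ : 0 ≤ δ) (ht : 0 ≤ t) :
    (∫ s in (0:ℝ)..(2 * t), (δ + s) ^ (p - 2) * s)
      ≤ (2 : ℝ) ^ (max 2 p) * ∫ s in (0:ℝ)..t, (δ + s) ^ (p - 2) * s := by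
  set f : ℝ → ℝ := fun s => (δ + s) ^ (p - 2) * s with hf
  have hsub : (∫ s in (0:ℝ)..(2 * t), f s) = 2 * ∫ u in (0:ℝ)..t, f (2 * u) := by
    have := intervalIntegral.smul_integral_comp_mul_left (a := 0) (b := t) f 2
    simp only [smul_eq_mul, mul_zero] at this
    rw [← this]
  rw [hsub]
  -- pointwise bound
  have key : ∀ u ∈ Set.Icc (0:ℝ) t, f (2 * u) ≤ 2 ^ (max 2 p - 1) * f u := by
    intro u hu
    rcases eq_or_lt_of_le hu.1 with rfl | hu0
    · simp [hf]
    · rcases le_or_gt 2 p with h2 | h2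
      · -- p ≥ 2
        rw [max_eq_right h2]
        have hb : (δ + 2 * u) ^ (p - 2) ≤ 2 ^ (p - 2) * (δ + u) ^ (p - 2) := by
          rw [← Real.mul_rpow (by norm_num) (by linarith)]
          exact Real.rpow_le_rpow (by linarith) (by linarith) (by linarith)
        have hpos : (0:ℝ) ≤ 2 * u := by linarith
        calc f (2 * u) = (δ + 2 * u) ^ (p - 2) * (2 * u) := rfl
          _ ≤ (2 ^ (p - 2) * (δ + u) ^ (p - 2)) * (2 * u) := by
              exact mul_le_mul_of_nonneg_right hb hpos
          _ = (2 ^ (p - 2) * 2) * ((δ + u) ^ (p - 2) * u) := by ring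
          _ = 2 ^ (p - 1) * f u := by
              rw [show p - 1 = p - 2 + 1 by ring, Real.rpow_add_one (by norm_num : (2:ℝ) ≠ 0)]
      · -- p < 2
        rw [max_eq_left h2.le]
        have hb : (δ + 2 * u) ^ (p - 2) ≤ (δ + u) ^ (p - 2) :=
          Real.rpow_le_rpow_of_nonpos (by linarith) (by linarith) (by linarith)
        have : f (2 * u) ≤ (δ + u) ^ (p - 2) * (2 * u) :=
          mul_le_mul_of_nonneg_right hb (by linarith)
        calc f (2 * u) ≤ (δ + u) ^ (p - 2) * (2 * u) := this
          _ = 2 * f u := by ring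
          _ = 2 ^ ((2:ℝ) - 1) * f u := by norm_num
  -- integrability
  have hint : IntervalIntegrable f MeasureTheory.volume 0 t := aux_integrable p δ t hp hδ ht
  have hint2 : IntervalIntegrable (fun u => f (2 * u)) MeasureTheory.volume 0 t := by
    have := (aux_integrable p δ (2 * t) hp hδ (by linarith)).comp_mul_left (c := 2)
    simpa using this
  have hmono : (∫ u in (0:ℝ)..t, f (2 * u)) ≤ ∫ u in (0:ℝ)..t, 2 ^ (max 2 p - 1) * f u :=
    intervalIntegral.integral_mono_on ht hint2 (hint.const_mul _) key
  rw [intervalIntegral.integral_const_mul] at hmono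
  have h2max : (2:ℝ) ^ (max 2 p) = 2 * 2 ^ (max 2 p - 1) := by
    have h := Real.rpow_add (by norm_num : (0:ℝ) < 2) 1 (max 2 p - 1)
    rw [Real.rpow_one, show (1:ℝ) + (max 2 p - 1) = max 2 p by ring] at h
    exact h
  rw [h2max, mul_assoc]
  exact mul_le_mul_of_nonneg_left hmono (by norm_num)
end

section
/- There exist constants c, C > 0 depending only on p such that for all δ ≥ 0, all a ≥ 0 and all t ≥ 0: c·(δ+a+t)^{p−2}·t² ≤ φ_a(t) ≤ C·(δ+a+t)^{p−2}·t². (In particular, taking a = 0, φ(t) ∼ (δ+t)^{p−2}·t² uniformly in t and δ.) -/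
open MeasureTheory intervalIntegral Real

lemma myInteg (p b u v : ℝ) (hp : 1 < p) (hb : 0 ≤ b) (hu : 0 ≤ u) (hv : 0 ≤ v) :
    IntervalIntegrable (fun s => (b + s) ^ (p - 2) * s) volume u v := by
  rcases eq_or_lt_of_le hb with hb0 | hb0
  · have h1 : IntervalIntegrable (fun s : ℝ => s ^ (p - 1)) volume u v :=
      intervalIntegrable_rpow' (by linarith)
    refine h1.congr ?_
    intro s hs
    have hs0 : 0 < s := lt_of_le_of_lt (le_min hu hv) hs.1
    simp only [← hb0, zero_add]
    rw [show p - 1 = (p - 2) + 1 by ring, Real.rpow_add_one hs0.ne']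
  · apply ContinuousOn.intervalIntegrable
    apply ContinuousOn.mul _ continuousOn_id
    apply ContinuousOn.rpow_const (by fun_prop)
    intro x hx
    left
    have hx0 : 0 ≤ x := le_trans (le_min hu hv) hx.1
    positivity

lemma myLin (c u v : ℝ) : ∫ s in u..v, c * s = c * ((v ^ 2 - u ^ 2) / 2) := by
  rw [intervalIntegral.integral_const_mul, integral_id]


/-- For the shifted function `φ_a(t) = ∫₀ᵗ (δ+a+s)^(p-2) * s ds` (real powers, with
`x^r = 0` for `x = 0`, `r < 0`), there are constants `c, C > 0` depending only on `p`
such that `c * (δ+a+t)^(p-2) * t² ≤ φ_a(t) ≤ C * (δ+a+t)^(p-2) * t²` for all `δ ≥ 0`,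
`a ≥ 0`, `t ≥ 0`. (Taking `a = 0` yields `φ(t) ∼ (δ+t)^(p-2) * t²` uniformly in `t`, `δ`.) -/
theorem stmt3 (p : ℝ) (hp : 1 < p) :
    ∃ c : ℝ, 0 < c ∧ ∃ C : ℝ, 0 < C ∧
      ∀ δ : ℝ, 0 ≤ δ → ∀ a : ℝ, 0 ≤ a → ∀ t : ℝ, 0 ≤ t →
        c * ((δ + a + t) ^ (p - 2) * t ^ 2)
            ≤ (∫ s in (0:ℝ)..t, (δ + a + s) ^ (p - 2) * s) ∧
        (∫ s in (0:ℝ)..t, (δ + a + s) ^ (p - 2) * s)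
            ≤ C * ((δ + a + t) ^ (p - 2) * t ^ 2) := by
  refine ⟨(2:ℝ) ^ (-p), rpow_pos_of_pos two_pos _, (2:ℝ) ^ (2 - p) + 1, by positivity, ?_⟩
  intro δ hδ a ha t ht
  set b := δ + a with hbdef
  have hb : 0 ≤ b := by positivity
  rcases eq_or_lt_of_le ht with ht0 | ht0
  · rw [← ht0]; simp
  have hbt : 0 < b + t := by linarith
  have hK : 0 ≤ (b + t) ^ (p - 2) := rpow_nonneg hbt.le _
  have ht2 : (0:ℝ) ≤ t ^ 2 := sq_nonneg t
  have hInt : IntervalIntegrable (fun s => (b + s) ^ (p - 2) * s) volume 0 t :=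
    myInteg p b 0 t hp hb le_rfl ht
  have hA : (0:ℝ) < (2:ℝ) ^ (p - 2) := rpow_pos_of_pos two_pos _
  have hkey : (2:ℝ) ^ (-p) * (2:ℝ) ^ (p - 2) = 1 / 4 := by
    rw [← Real.rpow_add two_pos, show -p + (p - 2) = ((-2 : ℤ) : ℝ) by push_cast; ring,
      Real.rpow_intCast]
    norm_num
  have hhalf : ((b + t) / 2) ^ (p - 2) = (b + t) ^ (p - 2) / (2:ℝ) ^ (p - 2) :=
    Real.div_rpow hbt.le two_pos.le (p-2)
  have hinv : (b + t) ^ (p - 2) / (2:ℝ) ^ (p - 2) = (2:ℝ) ^ (2 - p) * (b + t) ^ (p - 2) := by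
    rw [div_eq_mul_inv, ← Real.rpow_neg two_pos.le, show -(p-2) = 2-p by ring, mul_comm]
  constructor
  · -- lower bound
    rcases le_or_gt p 2 with hp2 | hp2
    · -- 1 < p ≤ 2 : integrand ≥ (b+t)^(p-2) * s
      have hmono : ∀ s ∈ Set.Icc (0:ℝ) t, (b + t) ^ (p - 2) * s ≤ (b + s) ^ (p - 2) * s := by
        intro s hs
        rcases eq_or_lt_of_le hs.1 with h0 | h0
        · simp [← h0]
        · exact mul_le_mul_of_nonneg_right
            (rpow_le_rpow_of_nonpos (by linarith) (by linarith [hs.2]) (by linarith)) hs.1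
      have hmi := intervalIntegral.integral_mono_on ht
        ((continuous_const.mul continuous_id).intervalIntegrable 0 t)
        hInt hmono
      simp only [Pi.mul_apply, id_eq] at hmi
      rw [myLin] at hmi
      have hc : (2:ℝ) ^ (-p) ≤ 1 / 2 := by
        rw [show (1:ℝ)/2 = (2:ℝ) ^ (-1:ℝ) by rw [Real.rpow_neg_one]; norm_num]
        exact Real.rpow_le_rpow_of_exponent_le one_le_two (by linarith)
      nlinarith [mul_nonneg hK ht2]
    · -- 2 < p : restrict to [t/2, t]
      have hsplit := intervalIntegral.integral_add_adjacent_intervals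
        (myInteg p b 0 (t/2) hp hb le_rfl (by linarith))
        (myInteg p b (t/2) t hp hb (by linarith) ht)
      have h1 : 0 ≤ ∫ s in (0:ℝ)..(t/2), (b + s) ^ (p - 2) * s := by
        apply intervalIntegral.integral_nonneg (by linarith)
        intro u hu
        exact mul_nonneg (rpow_nonneg (by linarith [hu.1]) _) hu.1
      have hmono : ∀ s ∈ Set.Icc (t/2) t,
          ((b + t) / 2) ^ (p - 2) * (t / 2) ≤ (b + s) ^ (p - 2) * s := by
        intro s hs
        apply mul_le_mul _ hs.1 (by linarith) (rpow_nonneg (by linarith [hs.1]) _)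
        exact Real.rpow_le_rpow (by positivity) (by linarith [hs.1]) (by linarith)
      have hmi := intervalIntegral.integral_mono_on (by linarith : t/2 ≤ t)
        (intervalIntegrable_const)
        (myInteg p b (t/2) t hp hb (by linarith) ht) hmono
      rw [intervalIntegral.integral_const, smul_eq_mul] at hmi
      have heq : (2:ℝ) ^ (-p) * ((b + t) ^ (p - 2) * t ^ 2)
          = (t - t/2) * (((b + t) / 2) ^ (p - 2) * (t / 2)) := by
        have hc2 : (2:ℝ) ^ (-p) = 1 / (4 * (2:ℝ) ^ (p - 2)) := by
          rw [eq_div_iff (by positivity)]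
          linear_combination 4 * hkey
        rw [hhalf, hc2]
        field_simp
        ring
      linarith [hmi]
  · -- upper bound
    rcases le_or_gt p 2 with hp2 | hp2
    · rcases le_or_gt t b with htb | htb
      · -- t ≤ b : integrand ≤ ((b+t)/2)^(p-2) * s
        have hmono : ∀ s ∈ Set.Icc (0:ℝ) t,
            (b + s) ^ (p - 2) * s ≤ ((b + t) / 2) ^ (p - 2) * s := by
          intro s hs
          rcases eq_or_lt_of_le hs.1 with h0 | h0
          · simp [← h0]
          · exact mul_le_mul_of_nonneg_right
              (rpow_le_rpow_of_nonpos (by positivity) (by linarith) (by linarith)) hs.1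
        have hmi := intervalIntegral.integral_mono_on ht hInt
          ((continuous_const.mul continuous_id).intervalIntegrable 0 t)
          hmono
        simp only [Pi.mul_apply, id_eq] at hmi
        rw [myLin, hhalf] at hmi
        have h2p : (0:ℝ) < (2:ℝ) ^ (2 - p) := rpow_pos_of_pos two_pos _
        rw [hinv] at hmi
        nlinarith [mul_nonneg hK ht2, mul_nonneg (mul_nonneg h2p.le hK) ht2]
      · -- b < t : integrand ≤ s^(p-1)
        have hmono : ∀ s ∈ Set.Icc (0:ℝ) t, (b + s) ^ (p - 2) * s ≤ s ^ (p - 1) := by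
          intro s hs
          rcases eq_or_lt_of_le hs.1 with h0 | h0
          · rw [← h0]
            simp [Real.zero_rpow (by linarith : p - 1 ≠ 0)]
          · rw [show p - 1 = (p - 2) + 1 by ring, Real.rpow_add_one h0.ne']
            exact mul_le_mul_of_nonneg_right
              (rpow_le_rpow_of_nonpos h0 (by linarith) (by linarith)) hs.1
        have hmi := intervalIntegral.integral_mono_on ht hInt
          (intervalIntegrable_rpow' (by linarith)) hmono
        have hrint : ∫ s in (0:ℝ)..t, s ^ (p - 1) = t ^ p / p := by
          rw [integral_rpow (Or.inl (by linarith))]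
          rw [show p - 1 + 1 = p by ring, Real.zero_rpow (by linarith : p ≠ 0)]
          ring
        rw [hrint] at hmi
        have htp : t ^ p = t ^ (p - 2) * t ^ 2 := by
          rw [← Real.rpow_natCast t 2, ← Real.rpow_add ht0]
          norm_num
        have hcomp : t ^ (p - 2) ≤ (2:ℝ) ^ (2 - p) * (b + t) ^ (p - 2) := by
          have h1 : t ^ (p - 2) ≤ ((b + t) / 2) ^ (p - 2) :=
            rpow_le_rpow_of_nonpos (by positivity) (by linarith) (by linarith)
          rw [hhalf, hinv] at h1
          exact h1
        have hppos : (0:ℝ) < p := by linarith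
        have htpm : (0:ℝ) ≤ t ^ (p - 2) := rpow_nonneg ht _
        calc (∫ s in (0:ℝ)..t, (b + s) ^ (p - 2) * s) ≤ t ^ p / p := hmi
          _ ≤ t ^ p := by
              rw [div_le_iff₀ hppos]
              nlinarith [Real.rpow_nonneg ht p]
          _ = t ^ (p - 2) * t ^ 2 := htp
          _ ≤ ((2:ℝ) ^ (2 - p) + 1) * ((b + t) ^ (p - 2) * t ^ 2) := by
              nlinarith [mul_nonneg hK ht2]
    · -- 2 < p : integrand ≤ (b+t)^(p-2) * s
      have hmono : ∀ s ∈ Set.Icc (0:ℝ) t, (b + s) ^ (p - 2) * s ≤ (b + t) ^ (p - 2) * s := by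
        intro s hs
        exact mul_le_mul_of_nonneg_right
          (Real.rpow_le_rpow (by linarith [hs.1]) (by linarith [hs.2]) (by linarith)) hs.1
      have hmi := intervalIntegral.integral_mono_on ht hInt
        ((continuous_const.mul continuous_id).intervalIntegrable 0 t) hmono
      simp only [Pi.mul_apply, id_eq] at hmi
      rw [myLin] at hmi
      have h2p : (0:ℝ) < (2:ℝ) ^ (2 - p) := rpow_pos_of_pos two_pos _
      nlinarith [mul_nonneg hK ht2]
end

section
/- Let p > 1 and p' = p/(p−1). For every ε > 0 there exists a constant c_ε > 0 depending only on ε and p such that for all δ ≥ 0, all a ≥ 0 and all s, t ≥ 0: s·t ≤ ε·(δ+a+s)^{p−2}·s² + c_ε·((δ+a)^{p−1}+t)^{p'−2}·t². (This is the shifted Young inequality s·t ≤ ε·φ_a(s) + c_ε·(φ_a)^*(t) expressed through the explicit equivalents of φ_a and its convex conjugate.) -/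
open Real

private lemma aux_min {r K x y : ℝ} (hx : 0 < x) (hK : 1 ≤ K) (hxy : x ≤ y)
    (hyK : y ≤ K * x) : min 1 (K ^ r) * x ^ r ≤ y ^ r := by
  rcases le_or_gt 0 r with hr | hr
  · calc min 1 (K ^ r) * x ^ r ≤ 1 * x ^ r := by
          exact mul_le_mul_of_nonneg_right (min_le_left _ _) (rpow_nonneg hx.le r)
    _ = x ^ r := one_mul _
    _ ≤ y ^ r := Real.rpow_le_rpow hx.le hxy hr
  · calc min 1 (K ^ r) * x ^ r ≤ K ^ r * x ^ r :=
          mul_le_mul_of_nonneg_right (min_le_right _ _) (rpow_nonneg hx.le r)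
    _ = (K * x) ^ r := (Real.mul_rpow (by linarith) hx.le).symm
    _ ≤ y ^ r := Real.rpow_le_rpow_of_nonpos (lt_of_lt_of_le hx hxy) hyK hr.le

private lemma aux_step {D X c s : ℝ} (hD : 0 < D) (h : D * s ≤ X) (hc : 1 / D ≤ c)
    (hX : 0 ≤ X) : s ≤ c * X := by
  have h1 : s ≤ X / D := (le_div_iff₀ hD).2 (by linarith)
  calc s ≤ X / D := h1
  _ = (1 / D) * X := by ring
  _ ≤ c * X := mul_le_mul_of_nonneg_right hc hX

/-- Shifted Young inequality: for `p > 1` with Hölder conjugate `p' = p/(p-1)`, and for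
every `ε > 0`, there is `c_ε > 0` depending only on `ε` and `p` such that for all `δ ≥ 0`,
`a ≥ 0` and `s, t ≥ 0`:
`s * t ≤ ε * (δ+a+s)^(p-2) * s² + c_ε * ((δ+a)^(p-1) + t)^(p'-2) * t²`
(real powers, with `x^r = 0` for `x = 0`, `r < 0`). -/
theorem stmt4 (p ε : ℝ) (hp : 1 < p) (hε : 0 < ε) :
    ∃ c : ℝ, 0 < c ∧
      ∀ δ : ℝ, 0 ≤ δ → ∀ a : ℝ, 0 ≤ a → ∀ s : ℝ, 0 ≤ s → ∀ t : ℝ, 0 ≤ t →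
        s * t ≤ ε * ((δ + a + s) ^ (p - 2) * s ^ 2)
              + c * (((δ + a) ^ (p - 1) + t) ^ (p / (p - 1) - 2) * t ^ 2) := by
  have hp1 : (0:ℝ) < p - 1 := by linarith
  set r : ℝ := p / (p - 1) - 2 with hr_def
  have hr1 : r + 1 = 1 / (p - 1) := by rw [hr_def]; field_simp; ring
  have hr2 : (p - 1) * r = 2 - p := by rw [hr_def]; field_simp; ring
  set k1 : ℝ := min 1 ((2:ℝ) ^ (p - 2)) with hk1_def
  have hk1 : 0 < k1 := lt_min one_pos (rpow_pos_of_pos two_pos _)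
  set k3 : ℝ := min 1 ((2:ℝ) ^ r) with hk3_def
  have hk3 : 0 < k3 := lt_min one_pos (rpow_pos_of_pos two_pos _)
  set K : ℝ := 1 + 1 / (ε * k1) with hK_def
  have hK1 : 1 ≤ K := by
    rw [hK_def]
    have : 0 < 1 / (ε * k1) := by positivity
    linarith
  set k2 : ℝ := min 1 (K ^ r) with hk2_def
  have hk2 : 0 < k2 := lt_min one_pos (rpow_pos_of_pos (by linarith) _)
  set D1 : ℝ := k2 * (ε * k1) ^ (1 / (p - 1)) with hD1_def
  have hD1 : 0 < D1 := mul_pos hk2 (rpow_pos_of_pos (by positivity) _)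
  set D2 : ℝ := ε * k1 * k3 with hD2_def
  have hD2 : 0 < D2 := by positivity
  clear_value k1 k3 K k2 D1 D2
  refine ⟨max (max (1 / D1) (1 / D2)) (1 / k3), by positivity, ?_⟩
  intro δ hδ a ha s hs t ht
  set c : ℝ := max (max (1 / D1) (1 / D2)) (1 / k3) with hc_def
  have hc : 0 < c := by positivity
  clear_value c
  set b : ℝ := δ + a with hb_def
  have hb : 0 ≤ b := by positivity
  have hφ : (0:ℝ) ≤ (b + s) ^ (p - 2) * s ^ 2 := by positivity
  have hψ : (0:ℝ) ≤ (b ^ (p - 1) + t) ^ r * t ^ 2 := by positivity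
  rcases le_or_gt t (ε * ((b + s) ^ (p - 2) * s)) with hA | hB
  · -- case A
    have h1 := mul_le_mul_of_nonneg_left hA hs
    linarith [h1, mul_nonneg hc.le hψ]
  · -- case B
    have ht' : 0 < t := lt_of_le_of_lt (by positivity) hB
    rcases eq_or_lt_of_le hs with hs0 | hs'
    · rw [← hs0]; nlinarith
    have key : s ≤ c * ((b ^ (p - 1) + t) ^ r * t) := by
      rcases le_or_gt b s with hbs | hbs
      · -- B1 : b ≤ s
        have h1 : k1 * s ^ (p - 2) ≤ (b + s) ^ (p - 2) := by
          rw [hk1_def]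
          exact aux_min hs' one_le_two (by linarith) (by linarith)
        have h2 : ε * k1 * s ^ (p - 1) ≤ t := by
          have hss : s ^ (p - 2) * s = s ^ (p - 1) := by
            rw [← Real.rpow_add_one hs'.ne' (p - 2)]; ring_nf
          have hm := mul_le_mul_of_nonneg_left (mul_le_mul_of_nonneg_right h1 hs) hε.le
          calc ε * k1 * s ^ (p - 1) = ε * (k1 * s ^ (p - 2) * s) := by rw [← hss]; ring
          _ ≤ ε * ((b + s) ^ (p - 2) * s) := hm
          _ ≤ t := hB.le
        -- b^(p-1) ≤ s^(p-1) ≤ t/(ε k1), so b^(p-1)+t ≤ K t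
        have h3 : b ^ (p - 1) ≤ t / (ε * k1) := by
          calc b ^ (p - 1) ≤ s ^ (p - 1) := Real.rpow_le_rpow hb hbs (by linarith)
          _ ≤ t / (ε * k1) := by rw [le_div_iff₀ (by positivity)]; linarith [h2]
        have h4 : k2 * t ^ r ≤ (b ^ (p - 1) + t) ^ r := by
          rw [hk2_def]
          refine aux_min ht' hK1 (by linarith [Real.rpow_nonneg hb (p - 1)]) ?_
          have : K * t = t + (1 / (ε * k1)) * t := by rw [hK_def]; ring
          rw [this]
          have : t / (ε * k1) = (1 / (ε * k1)) * t := by ring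
          linarith [h3.trans_eq this]
        have h5 : D1 * s ≤ (b ^ (p - 1) + t) ^ r * t := by
          have htr : t ^ r * t = t ^ (r + 1) := (Real.rpow_add_one ht'.ne' r).symm
          have h6 : (ε * k1) ^ (1 / (p - 1)) * s ≤ t ^ (r + 1) := by
            rw [hr1]
            calc (ε * k1) ^ (1 / (p - 1)) * s
                = (ε * k1 * s ^ (p - 1)) ^ (1 / (p - 1)) := by
                  have hsp : (s ^ (p - 1)) ^ (1 / (p - 1)) = s := by
                    rw [← Real.rpow_mul hs, mul_one_div, div_self hp1.ne', Real.rpow_one]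
                  conv_rhs => rw [Real.mul_rpow (by positivity) (Real.rpow_nonneg hs _), hsp]
            _ ≤ t ^ (1 / (p - 1)) :=
                  Real.rpow_le_rpow (by positivity) h2 (by positivity)
          calc D1 * s = k2 * ((ε * k1) ^ (1 / (p - 1)) * s) := by rw [hD1_def]; ring
          _ ≤ k2 * t ^ (r + 1) := mul_le_mul_of_nonneg_left h6 hk2.le
          _ = k2 * t ^ r * t := by rw [← htr]; ring
          _ ≤ (b ^ (p - 1) + t) ^ r * t := mul_le_mul_of_nonneg_right h4 ht
        exact aux_step hD1 h5 (by rw [hc_def]; exact le_trans (le_max_left _ _) (le_max_left _ _)) (by positivity)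
      · -- B2 : s < b
        have hb' : 0 < b := lt_of_le_of_lt hs hbs
        have h1 : k1 * b ^ (p - 2) ≤ (b + s) ^ (p - 2) := by
          rw [hk1_def]
          exact aux_min hb' one_le_two (by linarith) (by linarith)
        have h2 : ε * k1 * b ^ (p - 2) * s ≤ t := by
          have hm := mul_le_mul_of_nonneg_left (mul_le_mul_of_nonneg_right h1 hs) hε.le
          calc ε * k1 * b ^ (p - 2) * s = ε * (k1 * b ^ (p - 2) * s) := by ring
          _ ≤ ε * ((b + s) ^ (p - 2) * s) := hm
          _ ≤ t := hB.le
        have hbp : 0 < b ^ (p - 1) := rpow_pos_of_pos hb' _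
        rcases le_or_gt t (b ^ (p - 1)) with hT | hT
        · -- B2a
          have h4 : k3 * (b ^ (p - 1)) ^ r ≤ (b ^ (p - 1) + t) ^ r := by
            rw [hk3_def]
            exact aux_min hbp one_le_two (by linarith) (by linarith)
          have hbr : (b ^ (p - 1)) ^ r = b ^ (2 - p) := by
            rw [← Real.rpow_mul hb, hr2]
          have hbb : b ^ (2 - p) * b ^ (p - 2) = 1 := by
            rw [← Real.rpow_add hb']; norm_num
          have h5 : D2 * s ≤ (b ^ (p - 1) + t) ^ r * t := by
            calc D2 * s = k3 * (b ^ (2 - p) * (ε * k1 * b ^ (p - 2) * s)) := by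
                  rw [hD2_def]; linear_combination (-(ε * k1 * k3 * s)) * hbb
            _ ≤ k3 * (b ^ (2 - p) * t) := by
                  refine mul_le_mul_of_nonneg_left ?_ hk3.le
                  exact mul_le_mul_of_nonneg_left h2 (by positivity)
            _ = k3 * (b ^ (p - 1)) ^ r * t := by rw [hbr]; ring
            _ ≤ (b ^ (p - 1) + t) ^ r * t := mul_le_mul_of_nonneg_right h4 ht
          exact aux_step hD2 h5 (by rw [hc_def]; exact le_trans (le_max_right _ _) (le_max_left _ _)) (by positivity)
        · -- B2b
          have h4 : k3 * t ^ r ≤ (b ^ (p - 1) + t) ^ r := by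
            rw [hk3_def]
            exact aux_min ht' one_le_two (by linarith) (by linarith)
          have h6 : b ≤ t ^ (r + 1) := by
            rw [hr1]
            calc b = (b ^ (p - 1)) ^ (1 / (p - 1)) := by
                  rw [← Real.rpow_mul hb, mul_one_div, div_self hp1.ne', Real.rpow_one]
            _ ≤ t ^ (1 / (p - 1)) := Real.rpow_le_rpow hbp.le hT.le (by positivity)
          have h5 : k3 * s ≤ (b ^ (p - 1) + t) ^ r * t := by
            have htr : t ^ r * t = t ^ (r + 1) := (Real.rpow_add_one ht'.ne' r).symm
            calc k3 * s ≤ k3 * t ^ (r + 1) := by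
                  refine mul_le_mul_of_nonneg_left (le_trans (le_of_lt hbs) h6) hk3.le
            _ = k3 * t ^ r * t := by rw [← htr]; ring
            _ ≤ (b ^ (p - 1) + t) ^ r * t := mul_le_mul_of_nonneg_right h4 ht
          exact aux_step hk3 h5 (by rw [hc_def]; exact le_max_right _ _) (by positivity)
    have := mul_le_mul_of_nonneg_right key ht
    linarith [this, mul_nonneg hε.le hφ]
end

section
/- Let p > 1. For every ε > 0 there exists a constant c_ε > 0 depending only on ε and p such that for all δ ≥ 0, all a ≥ 0 and all s, t ≥ 0: s·φ_a'(t) + t·φ_a'(s) ≤ ε·φ_a(s) + c_ε·φ_a(t), where φ_a'(r) = (δ+a+r)^{p−2}·r. -/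
open Real MeasureTheory intervalIntegral

namespace Stmt5Aux

variable {p b : ℝ}

lemma f_nonneg (hb : 0 ≤ b) {r : ℝ} (hr : 0 ≤ r) : 0 ≤ (b + r) ^ (p - 2) * r :=
  mul_nonneg (Real.rpow_nonneg (by linarith) _) hr

lemma f_mono (hp : 1 < p) (hb : 0 ≤ b) :
    MonotoneOn (fun r => (b + r) ^ (p - 2) * r) (Set.Ici 0) := by
  intro r₁ hr₁ r₂ hr₂ h
  simp only [Set.mem_Ici] at hr₁ hr₂
  rcases eq_or_lt_of_le (by linarith : (0:ℝ) ≤ b + r₁) with h1 | h1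
  · have hr0 : r₁ = 0 := by linarith
    simpa [hr0] using f_nonneg (p := p) hb hr₂
  · have h2 : 0 < b + r₂ := by linarith
    have e1 : (b + r₁) ^ (p - 2) * r₁ = (b + r₁) ^ (p - 1) * (r₁ / (b + r₁)) := by
      rw [show p - 1 = (p - 2) + 1 by ring, Real.rpow_add h1, Real.rpow_one]
      field_simp
    have e2 : (b + r₂) ^ (p - 2) * r₂ = (b + r₂) ^ (p - 1) * (r₂ / (b + r₂)) := by
      rw [show p - 1 = (p - 2) + 1 by ring, Real.rpow_add h2, Real.rpow_one]
      field_simp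
    simp only []
    rw [e1, e2]
    apply mul_le_mul
    · exact Real.rpow_le_rpow h1.le (by linarith) (by linarith)
    · rw [div_le_div_iff₀ h1 h2]; nlinarith
    · positivity
    · positivity

lemma f_dilate (hp : 1 < p) (hb : 0 ≤ b) {d u : ℝ} (hd : 1 ≤ d) (hu : 0 ≤ u) :
    (b + d * u) ^ (p - 2) * (d * u) ≤ d ^ max 1 (p - 1) * ((b + u) ^ (p - 2) * u) := by
  rcases eq_or_lt_of_le hu with rfl | hu'
  · simp
  · have hbu : 0 < b + u := by linarith
    have hdu : u ≤ d * u := by nlinarith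
    have hbdu : 0 < b + d * u := by linarith
    have hd0 : 0 < d := by linarith
    rcases le_total p 2 with hp2 | hp2
    · have hmax : (1:ℝ) ≤ max 1 (p - 1) := le_max_left _ _
      have h1 : (b + d * u) ^ (p - 2) ≤ (b + u) ^ (p - 2) :=
        Real.rpow_le_rpow_of_nonpos hbu (by linarith) (by linarith)
      have h2 : d ≤ d ^ max 1 (p - 1) := by
        calc d = d ^ (1:ℝ) := (Real.rpow_one d).symm
        _ ≤ d ^ max 1 (p - 1) := Real.rpow_le_rpow_of_exponent_le hd hmax
      have hfu : 0 ≤ (b + u) ^ (p - 2) * u := f_nonneg hb hu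
      calc (b + d * u) ^ (p - 2) * (d * u) ≤ (b + u) ^ (p - 2) * (d * u) := by
            apply mul_le_mul_of_nonneg_right h1 (by positivity)
        _ = d * ((b + u) ^ (p - 2) * u) := by ring
        _ ≤ d ^ max 1 (p - 1) * ((b + u) ^ (p - 2) * u) :=
            mul_le_mul_of_nonneg_right h2 hfu
    · have hmax : max 1 (p - 1) = p - 1 := max_eq_right (by linarith)
      have h1 : (b + d * u) ^ (p - 2) ≤ d ^ (p - 2) * (b + u) ^ (p - 2) := by
        rw [← Real.mul_rpow hd0.le hbu.le]
        exact Real.rpow_le_rpow hbdu.le (by nlinarith) (by linarith)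
      have h2 : d ^ (p - 2) * d = d ^ (p - 1) := by
        rw [show p - 1 = (p - 2) + 1 by ring, Real.rpow_add hd0, Real.rpow_one]
      calc (b + d * u) ^ (p - 2) * (d * u)
          ≤ (d ^ (p - 2) * (b + u) ^ (p - 2)) * (d * u) := by
            apply mul_le_mul_of_nonneg_right h1 (by positivity)
        _ = (d ^ (p - 2) * d) * ((b + u) ^ (p - 2) * u) := by ring
        _ = d ^ max 1 (p - 1) * ((b + u) ^ (p - 2) * u) := by rw [h2, hmax]

lemma f_shrink (hp : 1 < p) (hb : 0 ≤ b) {l u : ℝ} (hl : 0 < l) (hl1 : l ≤ 1) (hu : 0 ≤ u) :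
    (b + l * u) ^ (p - 2) * (l * u) ≤ l ^ min 1 (p - 1) * ((b + u) ^ (p - 2) * u) := by
  rcases eq_or_lt_of_le hu with rfl | hu'
  · simp
  · have hbu : 0 < b + u := by linarith
    have hlu : 0 < l * u := by positivity
    have hbdu : 0 < b + l * u := by linarith
    have hmin1 : min 1 (p - 1) ≤ 1 := min_le_left _ _
    have hminp : min 1 (p - 1) ≤ p - 1 := min_le_right _ _
    rcases le_total p 2 with hp2 | hp2
    · have h1 : (b + l * u) ^ (p - 2) ≤ l ^ (p - 2) * (b + u) ^ (p - 2) := by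
        rw [← Real.mul_rpow hl.le hbu.le]
        exact Real.rpow_le_rpow_of_nonpos (by nlinarith) (by nlinarith) (by linarith)
      have h2 : l ^ (p - 2) * l = l ^ (p - 1) := by
        rw [show p - 1 = (p - 2) + 1 by ring, Real.rpow_add hl, Real.rpow_one]
      have h3 : l ^ (p - 1) ≤ l ^ min 1 (p - 1) :=
        Real.rpow_le_rpow_of_exponent_ge hl hl1 hminp
      have hfu : 0 ≤ (b + u) ^ (p - 2) * u := f_nonneg hb hu
      calc (b + l * u) ^ (p - 2) * (l * u)
          ≤ (l ^ (p - 2) * (b + u) ^ (p - 2)) * (l * u) := by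
            apply mul_le_mul_of_nonneg_right h1 (by positivity)
        _ = (l ^ (p - 2) * l) * ((b + u) ^ (p - 2) * u) := by ring
        _ = l ^ (p - 1) * ((b + u) ^ (p - 2) * u) := by rw [h2]
        _ ≤ l ^ min 1 (p - 1) * ((b + u) ^ (p - 2) * u) :=
            mul_le_mul_of_nonneg_right h3 hfu
    · have h1 : (b + l * u) ^ (p - 2) ≤ (b + u) ^ (p - 2) :=
        Real.rpow_le_rpow hbdu.le (by nlinarith) (by linarith)
      have h2 : l ≤ l ^ min 1 (p - 1) := by
        calc l = l ^ (1:ℝ) := (Real.rpow_one l).symm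
        _ ≤ l ^ min 1 (p - 1) := Real.rpow_le_rpow_of_exponent_ge hl hl1 hmin1
      have hfu : 0 ≤ (b + u) ^ (p - 2) * u := f_nonneg hb hu
      calc (b + l * u) ^ (p - 2) * (l * u) ≤ (b + u) ^ (p - 2) * (l * u) := by
            apply mul_le_mul_of_nonneg_right h1 (by positivity)
        _ = l * ((b + u) ^ (p - 2) * u) := by ring
        _ ≤ l ^ min 1 (p - 1) * ((b + u) ^ (p - 2) * u) :=
            mul_le_mul_of_nonneg_right h2 hfu

lemma f_integrable (hp : 1 < p) (hb : 0 ≤ b) {t₁ t₂ : ℝ} (h1 : 0 ≤ t₁) (h2 : t₁ ≤ t₂) :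
    IntervalIntegrable (fun r => (b + r) ^ (p - 2) * r) volume t₁ t₂ := by
  apply MonotoneOn.intervalIntegrable
  apply (f_mono hp hb).mono
  rw [Set.uIcc_of_le h2]
  exact fun x hx => le_trans h1 hx.1

lemma f_int_nonneg (hp : 1 < p) (hb : 0 ≤ b) {t : ℝ} (ht : 0 ≤ t) :
    0 ≤ ∫ r in (0:ℝ)..t, (b + r) ^ (p - 2) * r :=
  intervalIntegral.integral_nonneg ht (fun r hr => f_nonneg hb hr.1)

lemma f_key (hp : 1 < p) (hb : 0 ≤ b) {t : ℝ} (ht : 0 ≤ t) :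
    t * ((b + t) ^ (p - 2) * t)
      ≤ 2 ^ (max 1 (p - 1) + 1) * ∫ r in (0:ℝ)..t, (b + r) ^ (p - 2) * r := by
  have ht2 : 0 ≤ t / 2 := by linarith
  have hsplit : (∫ r in (0:ℝ)..t/2, (b + r) ^ (p - 2) * r)
      + (∫ r in (t/2)..t, (b + r) ^ (p - 2) * r)
      = ∫ r in (0:ℝ)..t, (b + r) ^ (p - 2) * r :=
    integral_add_adjacent_intervals (f_integrable hp hb le_rfl ht2)
      (f_integrable hp hb ht2 (by linarith))
  have h0 : 0 ≤ ∫ r in (0:ℝ)..t/2, (b + r) ^ (p - 2) * r := f_int_nonneg hp hb ht2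
  have h1 : (t/2) * ((b + t/2) ^ (p - 2) * (t/2))
      ≤ ∫ r in (t/2)..t, (b + r) ^ (p - 2) * r := by
    have hmono := intervalIntegral.integral_mono_on (by linarith : t/2 ≤ t)
      (_root_.intervalIntegrable_const (c := (b + t/2) ^ (p - 2) * (t/2)))
      (f_integrable hp hb ht2 (by linarith))
      (fun r hr => f_mono hp hb (Set.mem_Ici.mpr ht2)
        (Set.mem_Ici.mpr (le_trans ht2 hr.1)) hr.1)
    have heq : (∫ _r in (t/2)..t, ((b + t/2) ^ (p - 2) * (t/2)))
        = (t - t/2) * ((b + t/2) ^ (p - 2) * (t/2)) := by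
      rw [intervalIntegral.integral_const, smul_eq_mul]
    rw [heq] at hmono
    calc (t/2) * ((b + t/2) ^ (p - 2) * (t/2))
        = (t - t/2) * ((b + t/2) ^ (p - 2) * (t/2)) := by ring
      _ ≤ _ := hmono
  have h2 : (b + t) ^ (p - 2) * t
      ≤ 2 ^ max 1 (p - 1) * ((b + t/2) ^ (p - 2) * (t/2)) := by
    have := f_dilate hp hb (d := 2) (u := t/2) one_le_two ht2
    simpa [show 2 * (t/2) = t by ring] using this
  have hq : (0:ℝ) < 2 ^ max 1 (p - 1) := Real.rpow_pos_of_pos two_pos _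
  have hrw : (2:ℝ) ^ (max 1 (p - 1) + 1) = 2 ^ max 1 (p - 1) * 2 := by
    rw [Real.rpow_add two_pos, Real.rpow_one]
  rw [hrw, ← hsplit]
  have h3 : t * ((b + t) ^ (p - 2) * t)
      ≤ t * (2 ^ max 1 (p - 1) * ((b + t/2) ^ (p - 2) * (t/2))) :=
    mul_le_mul_of_nonneg_left h2 ht
  have h4 : t * (2 ^ max 1 (p - 1) * ((b + t/2) ^ (p - 2) * (t/2)))
      = (2 ^ max 1 (p - 1) * 2) * ((t/2) * ((b + t/2) ^ (p - 2) * (t/2))) := by ring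
  nlinarith [mul_le_mul_of_nonneg_left h1 (by positivity : (0:ℝ) ≤ 2 ^ max 1 (p - 1) * 2)]

end Stmt5Aux

set_option maxHeartbeats 1000000 in
/-- For `p > 1` and the shifted function `φ_a(t) = ∫₀ᵗ (δ+a+s)^(p-2) * s ds` with derivative
`φ_a'(r) = (δ+a+r)^(p-2) * r` (real powers, with `x^r = 0` for `x = 0`, `r < 0`): for every
`ε > 0` there is `c_ε > 0` depending only on `ε` and `p` such that for all `δ ≥ 0`, `a ≥ 0`
and `s, t ≥ 0`: `s * φ_a'(t) + t * φ_a'(s) ≤ ε * φ_a(s) + c_ε * φ_a(t)`. -/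
theorem stmt5 (p ε : ℝ) (hp : 1 < p) (hε : 0 < ε) :
    ∃ c : ℝ, 0 < c ∧
      ∀ δ : ℝ, 0 ≤ δ → ∀ a : ℝ, 0 ≤ a → ∀ s : ℝ, 0 ≤ s → ∀ t : ℝ, 0 ≤ t →
        s * ((δ + a + t) ^ (p - 2) * t) + t * ((δ + a + s) ^ (p - 2) * s)
          ≤ ε * (∫ r in (0:ℝ)..s, (δ + a + r) ^ (p - 2) * r)
            + c * ∫ r in (0:ℝ)..t, (δ + a + r) ^ (p - 2) * r := by
  classical
  set q : ℝ := max 1 (p - 1) with hqdef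
  set m : ℝ := min 1 (p - 1) with hmdef
  have hq1 : (1:ℝ) ≤ q := le_max_left _ _
  have hm0 : 0 < m := lt_min one_pos (by linarith)
  have hm1 : m ≤ 1 := min_le_left _ _
  set K : ℝ := 2 ^ (q + 1) with hKdef
  have hK : 0 < K := Real.rpow_pos_of_pos two_pos _
  set l : ℝ := min 1 ((ε / (2 * K)) ^ m⁻¹) with hldef
  have hE : (0:ℝ) < ε / (2 * K) := by positivity
  have hl : 0 < l := lt_min one_pos (Real.rpow_pos_of_pos hE _)
  have hl1 : l ≤ 1 := min_le_left _ _
  have hlm : l ^ m ≤ ε / (2 * K) := by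
    have h1 : l ^ m ≤ ((ε / (2 * K)) ^ m⁻¹) ^ m :=
      Real.rpow_le_rpow hl.le (min_le_right _ _) hm0.le
    rw [← Real.rpow_mul hE.le, inv_mul_cancel₀ hm0.ne', Real.rpow_one] at h1
    exact h1
  set L : ℝ := l ^ (-(q + 1)) with hLdef
  have hL : 0 < L := Real.rpow_pos_of_pos hl _
  refine ⟨2 * K * L + 2 * K, by positivity, ?_⟩
  intro δ hδ a ha s hs t ht
  set b : ℝ := δ + a with hbdef
  have hb : 0 ≤ b := by positivity
  set Is : ℝ := ∫ r in (0:ℝ)..s, (b + r) ^ (p - 2) * r with hIsdef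
  set It : ℝ := ∫ r in (0:ℝ)..t, (b + r) ^ (p - 2) * r with hItdef
  have hIs : 0 ≤ Is := Stmt5Aux.f_int_nonneg hp hb hs
  have hIt : 0 ≤ It := Stmt5Aux.f_int_nonneg hp hb ht
  have hkt : t * ((b + t) ^ (p - 2) * t) ≤ K * It := Stmt5Aux.f_key hp hb ht
  have hks : s * ((b + s) ^ (p - 2) * s) ≤ K * Is := Stmt5Aux.f_key hp hb hs
  have hmono := Stmt5Aux.f_mono (b := b) hp hb
  have hft : 0 ≤ (b + t) ^ (p - 2) * t := Stmt5Aux.f_nonneg hb ht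
  have hfs : 0 ≤ (b + s) ^ (p - 2) * s := Stmt5Aux.f_nonneg hb hs
  rcases le_or_gt s t with hst | hts
  · -- case s ≤ t
    have h1 : (b + s) ^ (p - 2) * s ≤ (b + t) ^ (p - 2) * t :=
      hmono (Set.mem_Ici.mpr hs) (Set.mem_Ici.mpr ht) hst
    have hA : s * ((b + t) ^ (p - 2) * t) ≤ t * ((b + t) ^ (p - 2) * t) :=
      mul_le_mul_of_nonneg_right hst hft
    have hB : t * ((b + s) ^ (p - 2) * s) ≤ t * ((b + t) ^ (p - 2) * t) :=
      mul_le_mul_of_nonneg_left h1 ht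
    clear_value q m K l L b Is It
    have e1 : (2 * K * L + 2 * K) * It = 2 * (K * L * It) + 2 * (K * It) := by ring
    linarith only [hA, hB, hkt, mul_nonneg hε.le hIs, e1,
      mul_nonneg (mul_nonneg hK.le hL.le) hIt]
  · rcases le_or_gt (l * s) t with hls | hsl
    · -- case l * s ≤ t < s
      have hs' : s ≤ l⁻¹ * t := by
        rw [← mul_le_mul_iff_of_pos_left hl, ← mul_assoc, mul_inv_cancel₀ hl.ne', one_mul]
        exact hls
      have hinv1 : 1 ≤ l⁻¹ := (one_le_inv₀ hl).mpr hl1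
      have hfsle : (b + s) ^ (p - 2) * s ≤ (b + l⁻¹ * t) ^ (p - 2) * (l⁻¹ * t) :=
        hmono (Set.mem_Ici.mpr hs) (Set.mem_Ici.mpr (by positivity)) hs'
      have hdil : (b + l⁻¹ * t) ^ (p - 2) * (l⁻¹ * t)
          ≤ l⁻¹ ^ q * ((b + t) ^ (p - 2) * t) := Stmt5Aux.f_dilate hp hb hinv1 ht
      have hiq : l⁻¹ ^ q ≤ L := by
        rw [Real.inv_rpow hl.le, ← Real.rpow_neg hl.le]
        exact Real.rpow_le_rpow_of_exponent_ge hl hl1 (by linarith)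
      have hi1 : l⁻¹ ≤ L := by
        have : l⁻¹ = l ^ (-1:ℝ) := by rw [Real.rpow_neg hl.le, Real.rpow_one]
        rw [this]
        exact Real.rpow_le_rpow_of_exponent_ge hl hl1 (by linarith)
      have hA : s * ((b + t) ^ (p - 2) * t) ≤ (l⁻¹ * t) * ((b + t) ^ (p - 2) * t) :=
        mul_le_mul_of_nonneg_right hs' hft
      have hB : (l⁻¹ * t) * ((b + t) ^ (p - 2) * t) ≤ (L * t) * ((b + t) ^ (p - 2) * t) :=
        mul_le_mul_of_nonneg_right (mul_le_mul_of_nonneg_right hi1 ht) hft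
      have hC : L * (t * ((b + t) ^ (p - 2) * t)) ≤ L * (K * It) :=
        mul_le_mul_of_nonneg_left hkt hL.le
      have hD : t * ((b + s) ^ (p - 2) * s) ≤ t * ((b + l⁻¹ * t) ^ (p - 2) * (l⁻¹ * t)) :=
        mul_le_mul_of_nonneg_left hfsle ht
      have hE2 : (b + l⁻¹ * t) ^ (p - 2) * (l⁻¹ * t) ≤ L * ((b + t) ^ (p - 2) * t) :=
        hdil.trans (mul_le_mul_of_nonneg_right hiq hft)
      have hF : t * ((b + l⁻¹ * t) ^ (p - 2) * (l⁻¹ * t)) ≤ t * (L * ((b + t) ^ (p - 2) * t)) :=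
        mul_le_mul_of_nonneg_left hE2 ht
      clear_value q m K l L b Is It
      have e1 : (L * t) * ((b + t) ^ (p - 2) * t) = L * (t * ((b + t) ^ (p - 2) * t)) := by
        ring
      have e2 : t * (L * ((b + t) ^ (p - 2) * t)) = L * (t * ((b + t) ^ (p - 2) * t)) := by ring
      have e3 : (2 * K * L + 2 * K) * It = 2 * (L * (K * It)) + 2 * (K * It) := by ring
      linarith only [hA, hB, e1, hC, hD, hF, e2, e3, mul_nonneg hε.le hIs,
        mul_nonneg hK.le hIt]
    · -- case t < l * s
      have hftle : (b + t) ^ (p - 2) * t ≤ (b + l * s) ^ (p - 2) * (l * s) :=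
        hmono (Set.mem_Ici.mpr ht) (Set.mem_Ici.mpr (by positivity)) hsl.le
      have hshr : (b + l * s) ^ (p - 2) * (l * s) ≤ l ^ m * ((b + s) ^ (p - 2) * s) :=
        Stmt5Aux.f_shrink hp hb hl hl1 hs
      have hllm : l ≤ l ^ m := by
        calc l = l ^ (1:ℝ) := (Real.rpow_one l).symm
        _ ≤ l ^ m := Real.rpow_le_rpow_of_exponent_ge hl hl1 hm1
      have h1 : s * ((b + t) ^ (p - 2) * t) ≤ l ^ m * (s * ((b + s) ^ (p - 2) * s)) := by
        have := mul_le_mul_of_nonneg_left (hftle.trans hshr) hs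
        calc s * ((b + t) ^ (p - 2) * t) ≤ s * (l ^ m * ((b + s) ^ (p - 2) * s)) := this
        _ = l ^ m * (s * ((b + s) ^ (p - 2) * s)) := by ring
      have h2 : t * ((b + s) ^ (p - 2) * s) ≤ l ^ m * (s * ((b + s) ^ (p - 2) * s)) := by
        calc t * ((b + s) ^ (p - 2) * s) ≤ (l * s) * ((b + s) ^ (p - 2) * s) :=
              mul_le_mul_of_nonneg_right hsl.le hfs
        _ = l * (s * ((b + s) ^ (p - 2) * s)) := by ring
        _ ≤ l ^ m * (s * ((b + s) ^ (p - 2) * s)) :=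
              mul_le_mul_of_nonneg_right hllm (mul_nonneg hs hfs)
      have h3 : l ^ m * (s * ((b + s) ^ (p - 2) * s)) ≤ l ^ m * (K * Is) :=
        mul_le_mul_of_nonneg_left hks (Real.rpow_nonneg hl.le m)
      have h4 : l ^ m * (K * Is) ≤ (ε / (2 * K)) * (K * Is) :=
        mul_le_mul_of_nonneg_right hlm (mul_nonneg hK.le hIs)
      have h5 : (ε / (2 * K)) * (K * Is) = (ε / 2) * Is := by
        field_simp
      have h4' : l ^ m * (K * Is) ≤ (ε / 2) * Is := h5 ▸ h4
      have hcIt : 0 ≤ (2 * K * L + 2 * K) * It :=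
        mul_nonneg (by positivity) hIt
      clear_value q m K l L b Is It
      linarith only [h1, h2, h3, h4', hcIt]
end

section
/- Let p > 1. There exist constants c, C > 0 depending only on p (in particular independent of δ, the dimension d, and the matrices) such that for all δ ≥ 0, all d ≥ 1 and all real d×d matrices P, Q: c·|F(P)−F(Q)|² ≤ (S(P)−S(Q)):(P−Q) ≤ C·|F(P)−F(Q)|². -/
open Matrix

/-- Symmetric part `P^sym = (P + Pᵀ)/2` of a square matrix. -/
noncomputable def msym {d : ℕ} (P : Matrix (Fin d) (Fin d) ℝ) : Matrix (Fin d) (Fin d) ℝ :=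
  (2⁻¹ : ℝ) • (P + Pᵀ)

/-- Frobenius inner product `A:B = ∑ᵢⱼ Aᵢⱼ Bᵢⱼ`. -/
noncomputable def mdot {d : ℕ} (A B : Matrix (Fin d) (Fin d) ℝ) : ℝ :=
  ∑ i, ∑ j, A i j * B i j

/-- Frobenius norm `|A| = (A:A)^(1/2)`. -/
noncomputable def mnorm {d : ℕ} (A : Matrix (Fin d) (Fin d) ℝ) : ℝ :=
  Real.sqrt (mdot A A)

/-- Stress tensor `S(P) = (δ + |P^sym|)^(p-2) • P^sym` (real power, `0^r = 0` for `r < 0`). -/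
noncomputable def Smap (p δ : ℝ) {d : ℕ} (P : Matrix (Fin d) (Fin d) ℝ) :
    Matrix (Fin d) (Fin d) ℝ :=
  ((δ + mnorm (msym P)) ^ (p - 2)) • msym P

/-- Associated function `F(P) = (δ + |P^sym|)^((p-2)/2) • P^sym`. -/
noncomputable def Fmap (p δ : ℝ) {d : ℕ} (P : Matrix (Fin d) (Fin d) ℝ) :
    Matrix (Fin d) (Fin d) ℝ :=
  ((δ + mnorm (msym P)) ^ ((p - 2) / 2)) • msym P



open Real

/-- Bernoulli corollary, `0 ≤ q ≤ 1` case: `(u^q - v^q) * v ≤ q * v^q * (u-v)`. -/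
lemma bern_small {u v q : ℝ} (hv : 0 < v) (huv : v ≤ u) (hq0 : 0 ≤ q) (hq1 : q ≤ 1) :
    (u ^ q - v ^ q) * v ≤ q * v ^ q * (u - v) := by
  have hu : 0 < u := hv.trans_le huv
  set t := u / v with ht
  have htv : t * v = u := div_mul_cancel₀ u hv.ne'
  have ht1 : (1:ℝ) ≤ t := (one_le_div hv).mpr huv
  have hb : t ^ q ≤ 1 + q * (t - 1) := by
    have h := rpow_one_add_le_one_add_mul_self (s := t - 1) (by linarith) hq0 hq1
    rw [show (1 : ℝ) + (t - 1) = t by ring] at h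
    exact h
  have htq : u ^ q = t ^ q * v ^ q := by
    rw [← htv, Real.mul_rpow (by linarith) hv.le]
  have hvq : (0:ℝ) ≤ v ^ q := Real.rpow_nonneg hv.le q
  rw [htq, ← htv]
  nlinarith [mul_le_mul_of_nonneg_right hb (mul_nonneg hvq hv.le)]

/-- Bernoulli corollary, `1 ≤ q` case: `(u^q - v^q) * v ≤ q * u^q * (u-v)`. -/
lemma bern_big {u v q : ℝ} (hv : 0 < v) (huv : v ≤ u) (hq : 1 ≤ q) :
    (u ^ q - v ^ q) * v ≤ q * u ^ q * (u - v) := by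
  have hu : 0 < u := hv.trans_le huv
  set t := v / u with ht
  have htu : t * u = v := div_mul_cancel₀ v hu.ne'
  have ht0 : 0 < t := div_pos hv hu
  have ht1 : t ≤ 1 := (div_le_one hu).mpr huv
  have hb : 1 + q * (t - 1) ≤ t ^ q := by
    have h := one_add_mul_self_le_rpow_one_add (s := t - 1) (by linarith) hq
    rw [show (1 : ℝ) + (t - 1) = t by ring] at h
    exact h
  have hvq : v ^ q = t ^ q * u ^ q := by
    rw [← htu, Real.mul_rpow ht0.le hu.le]
  have huq : (0:ℝ) ≤ u ^ q := Real.rpow_nonneg hu.le q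
  rw [hvq, ← htu]
  nlinarith [mul_le_mul_of_nonneg_right hb (mul_nonneg (mul_nonneg ht0.le huq) hu.le),
    mul_nonneg (mul_nonneg (mul_nonneg huq hu.le) (by linarith : (0:ℝ) ≤ q)) (sq_nonneg (1 - t))]

/-- `(u^q - v^q) * v ≤ q * u^q * (u-v)` for all `q ≥ 0`. -/
lemma bern_all {u v q : ℝ} (hv : 0 < v) (huv : v ≤ u) (hq0 : 0 ≤ q) :
    (u ^ q - v ^ q) * v ≤ q * u ^ q * (u - v) := by
  rcases le_or_gt q 1 with h1 | h1
  · refine (bern_small hv huv hq0 h1).trans ?_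
    have : v ^ q ≤ u ^ q := Real.rpow_le_rpow hv.le huv hq0
    have huv' : (0:ℝ) ≤ u - v := by linarith
    nlinarith [mul_nonneg (mul_nonneg hq0 (sub_nonneg.2 this)) huv']
  · exact bern_big hv huv h1.le

/-- Key scalar claim: for `e > -1`, `0 ≤ δ`, `0 ≤ b ≤ a`:
`min 1 (1+e) * (δ+a)^e * (a-b) ≤ (δ+a)^e * a - (δ+b)^e * b ≤ max 1 (1+e) * (δ+a)^e * (a-b)`. -/
lemma claim {e δ a b : ℝ} (he : -1 < e) (hδ : 0 ≤ δ) (hb : 0 ≤ b) (hba : b ≤ a) :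
    min 1 (1+e) * ((δ+a) ^ e * (a-b)) ≤ (δ+a) ^ e * a - (δ+b) ^ e * b ∧
    (δ+a) ^ e * a - (δ+b) ^ e * b ≤ max 1 (1+e) * ((δ+a) ^ e * (a-b)) := by
  have ha : 0 ≤ a := hb.trans hba
  have hv : 0 ≤ δ + b := by linarith
  have huv : δ + b ≤ δ + a := by linarith
  have hbv : b ≤ δ + b := by linarith
  have hue : (0:ℝ) ≤ (δ+a) ^ e := Real.rpow_nonneg (by linarith) e
  have hab : (0:ℝ) ≤ a - b := by linarith
  rcases eq_or_lt_of_le hv with h0 | hv0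
  · -- δ + b = 0, so b = 0
    have hb0 : b = 0 := by linarith [le_of_eq h0]
    subst hb0
    have hmin : min 1 (1+e) ≤ 1 := min_le_left _ _
    have hmax : (1:ℝ) ≤ max 1 (1+e) := le_max_left _ _
    constructor
    · simp only [mul_zero, sub_zero]
      nlinarith [mul_nonneg hue ha]
    · simp only [mul_zero, sub_zero]
      nlinarith [mul_nonneg hue ha]
  · have hu0 : 0 < δ + a := lt_of_lt_of_le hv0 huv
    have huveq : (δ+a) - (δ+b) = a - b := by ring
    rcases le_or_gt 0 e with he0 | he0
    · -- e ≥ 0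
      rw [min_eq_left (by linarith), max_eq_right (by linarith)]
      have hmono : (δ+b) ^ e ≤ (δ+a) ^ e := Real.rpow_le_rpow hv0.le huv he0
      constructor
      · nlinarith [mul_le_mul_of_nonneg_right hmono hb]
      · have h1 : ((δ+a) ^ e - (δ+b) ^ e) * b ≤ ((δ+a) ^ e - (δ+b) ^ e) * (δ+b) :=
          mul_le_mul_of_nonneg_left hbv (by linarith)
        have h2 := bern_all hv0 huv he0
        rw [huveq] at h2
        nlinarith
    · -- -1 < e < 0
      rw [min_eq_right (by linarith), max_eq_left (by linarith)]
      have hmono : (δ+a) ^ e ≤ (δ+b) ^ e := Real.rpow_le_rpow_of_nonpos hv0 huv he0.le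
      have hs0 : 0 < -e := by linarith
      have hs1 : -e ≤ 1 := by linarith
      have hke : (δ+a) ^ e * (δ+a) ^ (-e) = 1 := by
        rw [← Real.rpow_add hu0]; simp
      have hkv : (δ+b) ^ e * (δ+b) ^ (-e) = 1 := by
        rw [← Real.rpow_add hv0]; simp
      have hid : (δ+b) ^ e - (δ+a) ^ e
          = (δ+a) ^ e * (δ+b) ^ e * ((δ+a) ^ (-e) - (δ+b) ^ (-e)) := by
        linear_combination (-((δ+b) ^ e)) * hke + (δ+a) ^ e * hkv
      have hb2 := bern_small hv0 huv hs0.le hs1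
      rw [huveq] at hb2
      have hnn : (0:ℝ) ≤ (δ+a) ^ e * (δ+b) ^ e :=
        mul_nonneg hue (Real.rpow_nonneg hv0.le e)
      have hkey : ((δ+b) ^ e - (δ+a) ^ e) * (δ+b) ≤ (-e) * (δ+a) ^ e * (a - b) := by
        have h3 := mul_le_mul_of_nonneg_left hb2 hnn
        calc ((δ+b) ^ e - (δ+a) ^ e) * (δ+b)
            = (δ+a) ^ e * (δ+b) ^ e * (((δ+a) ^ (-e) - (δ+b) ^ (-e)) * (δ+b)) := by
              rw [hid]; ring
          _ ≤ (δ+a) ^ e * (δ+b) ^ e * ((-e) * (δ+b) ^ (-e) * (a - b)) := h3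
          _ = (-e) * (δ+a) ^ e * (a - b) * ((δ+b) ^ e * (δ+b) ^ (-e)) := by ring
          _ = (-e) * (δ+a) ^ e * (a - b) := by rw [hkv]; ring
      constructor
      · have h4 : ((δ+b) ^ e - (δ+a) ^ e) * b ≤ ((δ+b) ^ e - (δ+a) ^ e) * (δ+b) :=
          mul_le_mul_of_nonneg_left hbv (by linarith)
        nlinarith
      · nlinarith [mul_le_mul_of_nonneg_right hmono hb]

lemma rpow_half_sq {x : ℝ} (hx : 0 ≤ x) (r : ℝ) : (x ^ (r/2))^2 = x ^ r := by
  rcases eq_or_lt_of_le hx with h0 | hx0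
  · rcases eq_or_ne r 0 with hr | hr
    · simp [← h0, hr]
    · rw [← h0, Real.zero_rpow (by simpa using (div_ne_zero hr two_ne_zero)),
        Real.zero_rpow hr]
      norm_num
  · rw [sq, ← Real.rpow_add hx0]
    norm_num

set_option maxHeartbeats 2000000 in
lemma master (p : ℝ) (hp : 1 < p) {δ a b s : ℝ} (hδ : 0 ≤ δ) (hb : 0 ≤ b) (hba : b ≤ a)
    (hs : |s| ≤ a * b) :
    min (1/2) (min 1 (p-1) / (max 1 (p/2))^2) *
      (((δ+a) ^ ((p-2)/2))^2*a^2 + ((δ+b) ^ ((p-2)/2))^2*b^2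
        - 2*((δ+a) ^ ((p-2)/2)*((δ+b) ^ ((p-2)/2)))*s)
    ≤ ((δ+a) ^ ((p-2)/2))^2*a^2 + ((δ+b) ^ ((p-2)/2))^2*b^2
        - (((δ+a) ^ ((p-2)/2))^2+((δ+b) ^ ((p-2)/2))^2)*s ∧
    ((δ+a) ^ ((p-2)/2))^2*a^2 + ((δ+b) ^ ((p-2)/2))^2*b^2
        - (((δ+a) ^ ((p-2)/2))^2+((δ+b) ^ ((p-2)/2))^2)*s
    ≤ max 3 (max 1 (p-1) / (min 1 (p/2))^2) *
      (((δ+a) ^ ((p-2)/2))^2*a^2 + ((δ+b) ^ ((p-2)/2))^2*b^2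
        - 2*((δ+a) ^ ((p-2)/2)*((δ+b) ^ ((p-2)/2)))*s) := by
  have ha : 0 ≤ a := hb.trans hba
  have hab : (0:ℝ) ≤ a - b := by linarith
  set γ := (δ+a) ^ ((p-2)/2) with hγdef
  set η := (δ+b) ^ ((p-2)/2) with hηdef
  have hγ : 0 ≤ γ := Real.rpow_nonneg (by linarith) _
  have hη : 0 ≤ η := Real.rpow_nonneg (by linarith) _
  -- constants
  set K1 := min 1 (p-1) with hK1def
  set K2 := max 1 (p-1) with hK2def
  set K3 := min 1 (p/2) with hK3def
  set K4 := max 1 (p/2) with hK4def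
  have hK1 : 0 < K1 := lt_min one_pos (by linarith)
  have hK2 : 0 < K2 := lt_of_lt_of_le one_pos (le_max_left _ _)
  have hK3 : 0 < K3 := lt_min one_pos (by linarith)
  have hK4 : 0 < K4 := lt_of_lt_of_le one_pos (le_max_left _ _)
  -- the two claims
  have hAB := claim (e := p-2) (by linarith) hδ hb hba
  rw [show (1:ℝ) + (p-2) = p-1 by ring] at hAB
  rw [← rpow_half_sq (x := δ+a) (by linarith) (p-2),
      ← rpow_half_sq (x := δ+b) (by linarith) (p-2)] at hAB
  have hCD := claim (e := (p-2)/2) (by linarith) hδ hb hba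
  rw [show (1:ℝ) + (p-2)/2 = p/2 by ring] at hCD
  rw [← hγdef, ← hηdef] at hAB hCD
  rw [← hK1def, ← hK2def] at hAB
  rw [← hK3def, ← hK4def] at hCD
  -- basic consequences
  have hG : 0 ≤ γ*(a-b) := mul_nonneg hγ hab
  have hX0 : 0 ≤ γ*a - η*b := le_trans (by positivity) hCD.1
  have hY0 : 0 ≤ γ^2*a - η^2*b := le_trans (by positivity) hAB.1
  -- endpoint estimates (s = a*b)
  have hXsq : (γ*a - η*b)^2 ≤ K4^2*(γ*(a-b))^2 := by
    linarith [mul_self_le_mul_self hX0 hCD.2]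
  have hXsq2 : K3^2*(γ*(a-b))^2 ≤ (γ*a - η*b)^2 := by
    linarith [mul_self_le_mul_self (by positivity : (0:ℝ) ≤ K3*(γ*(a-b))) hCD.1]
  have hY : K1*(γ*(a-b))^2 ≤ (γ^2*a - η^2*b)*(a-b) := by
    linarith [mul_le_mul_of_nonneg_right hAB.1 hab]
  have hY2 : (γ^2*a - η^2*b)*(a-b) ≤ K2*(γ*(a-b))^2 := by
    linarith [mul_le_mul_of_nonneg_right hAB.2 hab]
  have hmm1 : K1/K4^2 * (K4^2*(γ*(a-b))^2) = K1*(γ*(a-b))^2 := by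
    field_simp
  have hmm2 : K2/K3^2 * (K3^2*(γ*(a-b))^2) = K2*(γ*(a-b))^2 := by
    field_simp
  have Pm_low : K1/K4^2 * (γ*a - η*b)^2 ≤ (γ^2*a - η^2*b)*(a-b) := by
    have h5 := mul_le_mul_of_nonneg_left hXsq (by positivity : (0:ℝ) ≤ K1/K4^2)
    linarith
  have Pm_high : (γ^2*a - η^2*b)*(a-b) ≤ K2/K3^2 * (γ*a - η*b)^2 := by
    have h6 := mul_le_mul_of_nonneg_left hXsq2 (by positivity : (0:ℝ) ≤ K2/K3^2)
    linarith
  -- endpoint estimates (s = -(a*b))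
  have Pp_low : (1/2) * (γ*a + η*b)^2 ≤ (γ^2*a + η^2*b)*(a+b) := by
    linarith [sq_nonneg (γ*a - η*b), mul_nonneg (mul_nonneg ha hb) (sq_nonneg γ),
      mul_nonneg (mul_nonneg ha hb) (sq_nonneg η)]
  have Pp_high : (γ^2*a + η^2*b)*(a+b) ≤ 3 * (γ*a + η*b)^2 := by
    linarith [mul_le_mul_of_nonneg_right hY0 ha,
      mul_le_mul_of_nonneg_left hba (mul_nonneg (sq_nonneg γ) ha),
      mul_nonneg (mul_nonneg (mul_nonneg hγ hη) ha) hb, sq_nonneg (η*b)]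
  obtain ⟨hsl, hsu⟩ := abs_le.mp hs
  set c := min (1/2) (K1 / K4^2) with hcdef
  set C := max 3 (K2 / K3^2) with hCdef
  have hc1 : c ≤ 1/2 := min_le_left _ _
  have hc2 : c ≤ K1/K4^2 := min_le_right _ _
  have hc0 : 0 < c := lt_min (by norm_num) (by positivity)
  have hC1 : (3:ℝ) ≤ C := le_max_left _ _
  have hC2 : K2/K3^2 ≤ C := le_max_right _ _
  constructor
  · rcases le_total (2*c*(γ*η)) (γ^2+η^2) with hw | hw
    · have he1 : 0 ≤ (γ^2*a - η^2*b)*(a-b) - c*(γ*a - η*b)^2 := by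
        linarith [Pm_low, mul_nonneg (sub_nonneg.2 hc2) (sq_nonneg (γ*a - η*b))]
      have hprod : 0 ≤ ((γ^2+η^2) - 2*c*(γ*η)) * (a*b - s) :=
        mul_nonneg (by linarith) (by linarith)
      linarith [he1, hprod]
    · have he2 : 0 ≤ (γ^2*a + η^2*b)*(a+b) - c*(γ*a + η*b)^2 := by
        linarith [Pp_low, mul_nonneg (sub_nonneg.2 hc1) (sq_nonneg (γ*a + η*b))]
      have hprod : 0 ≤ (2*c*(γ*η) - (γ^2+η^2)) * (s + a*b) :=
        mul_nonneg (by linarith) (by linarith)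
      linarith [he2, hprod]
  · rcases le_total (γ^2+η^2) (2*C*(γ*η)) with hw | hw
    · have he1 : 0 ≤ C*(γ*a - η*b)^2 - (γ^2*a - η^2*b)*(a-b) := by
        linarith [Pm_high, mul_nonneg (sub_nonneg.2 hC2) (sq_nonneg (γ*a - η*b))]
      have hprod : 0 ≤ (2*C*(γ*η) - (γ^2+η^2)) * (a*b - s) :=
        mul_nonneg (by linarith) (by linarith)
      linarith [he1, hprod]
    · have he2 : 0 ≤ C*(γ*a + η*b)^2 - (γ^2*a + η^2*b)*(a+b) := by
        linarith [Pp_high, mul_nonneg (by linarith : (0:ℝ) ≤ C - 3) (sq_nonneg (γ*a + η*b))]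
      have hprod : 0 ≤ ((γ^2+η^2) - 2*C*(γ*η)) * (s + a*b) :=
        mul_nonneg (by linarith) (by linarith)
      linarith [he2, hprod]

section matrixpart

open Matrix

variable {d : ℕ}

lemma msym_sub (P Q : Matrix (Fin d) (Fin d) ℝ) : msym (P - Q) = msym P - msym Q := by
  unfold msym
  ext i j
  simp [Matrix.sub_apply, Matrix.add_apply, Matrix.smul_apply, Matrix.transpose_apply]
  ring

lemma msym_symm (P : Matrix (Fin d) (Fin d) ℝ) : (msym P)ᵀ = msym P := by
  unfold msym
  rw [transpose_smul, transpose_add, transpose_transpose, add_comm]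

lemma mdot_comm (A B : Matrix (Fin d) (Fin d) ℝ) : mdot A B = mdot B A := by
  simp [mdot, mul_comm]

lemma mdot_smul_left (c : ℝ) (A B : Matrix (Fin d) (Fin d) ℝ) :
    mdot (c • A) B = c * mdot A B := by
  simp [mdot, Finset.mul_sum, mul_assoc]

lemma mdot_smul_right (c : ℝ) (A B : Matrix (Fin d) (Fin d) ℝ) :
    mdot A (c • B) = c * mdot A B := by
  simp [mdot, Finset.mul_sum, mul_left_comm]

lemma mdot_sub_left (A B C : Matrix (Fin d) (Fin d) ℝ) :
    mdot (A - B) C = mdot A C - mdot B C := by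
  simp [mdot, sub_mul, Finset.sum_sub_distrib]

lemma mdot_sub_right (A B C : Matrix (Fin d) (Fin d) ℝ) :
    mdot A (B - C) = mdot A B - mdot A C := by
  simp [mdot, mul_sub, Finset.sum_sub_distrib]

lemma mdot_add_right (A B C : Matrix (Fin d) (Fin d) ℝ) :
    mdot A (B + C) = mdot A B + mdot A C := by
  simp [mdot, mul_add, Finset.sum_add_distrib]

lemma mdot_transpose (A B : Matrix (Fin d) (Fin d) ℝ) : mdot Aᵀ Bᵀ = mdot A B := by
  rw [mdot, mdot]
  simp only [Matrix.transpose_apply]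
  rw [Finset.sum_comm]

lemma mdot_nonneg (A : Matrix (Fin d) (Fin d) ℝ) : 0 ≤ mdot A A :=
  Finset.sum_nonneg fun i _ => Finset.sum_nonneg fun j _ => mul_self_nonneg _

lemma mnorm_nonneg (A : Matrix (Fin d) (Fin d) ℝ) : 0 ≤ mnorm A := Real.sqrt_nonneg _

lemma mnorm_sq (A : Matrix (Fin d) (Fin d) ℝ) : mnorm A ^ 2 = mdot A A :=
  Real.sq_sqrt (mdot_nonneg A)

lemma mdot_msym (S X : Matrix (Fin d) (Fin d) ℝ) (hS : Sᵀ = S) :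
    mdot S (msym X) = mdot S X := by
  have ht : mdot S Xᵀ = mdot S X := by
    conv_lhs => rw [← hS]
    rw [mdot_transpose]
  show mdot S ((2⁻¹ : ℝ) • (X + Xᵀ)) = mdot S X
  rw [mdot_smul_right, mdot_add_right, ht]
  ring

lemma mdot_cauchy (A B : Matrix (Fin d) (Fin d) ℝ) : |mdot A B| ≤ mnorm A * mnorm B := by
  have key := Finset.sum_mul_sq_le_sq_mul_sq Finset.univ
    (fun x : Fin d × Fin d => A x.1 x.2) (fun x : Fin d × Fin d => B x.1 x.2)
  have e1 : ∑ x : Fin d × Fin d, A x.1 x.2 * B x.1 x.2 = mdot A B := by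
    simp [mdot, Fintype.sum_prod_type]
  have e2 : ∑ x : Fin d × Fin d, (A x.1 x.2) ^ 2 = mdot A A := by
    simp [mdot, Fintype.sum_prod_type, pow_two]
  have e3 : ∑ x : Fin d × Fin d, (B x.1 x.2) ^ 2 = mdot B B := by
    simp [mdot, Fintype.sum_prod_type, pow_two]
  rw [e1, e2, e3] at key
  have h4 : |mdot A B| = Real.sqrt ((mdot A B) ^ 2) := (Real.sqrt_sq_eq_abs _).symm
  rw [h4]
  calc Real.sqrt ((mdot A B) ^ 2) ≤ Real.sqrt (mdot A A * mdot B B) := Real.sqrt_le_sqrt key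
    _ = mnorm A * mnorm B := Real.sqrt_mul (mdot_nonneg A) _

lemma mdot_expand (x y : ℝ) (A B X : Matrix (Fin d) (Fin d) ℝ) :
    mdot (x • A - y • B) X = x * mdot A X - y * mdot B X := by
  rw [mdot_sub_left, mdot_smul_left, mdot_smul_left]

lemma comp1 (p δ : ℝ) (P Q : Matrix (Fin d) (Fin d) ℝ) :
    mdot (Smap p δ P - Smap p δ Q) (P - Q)
      = ((δ + mnorm (msym P)) ^ (p-2)) * mdot (msym P) (msym P)
        + ((δ + mnorm (msym Q)) ^ (p-2)) * mdot (msym Q) (msym Q)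
        - (((δ + mnorm (msym P)) ^ (p-2)) + ((δ + mnorm (msym Q)) ^ (p-2)))
            * mdot (msym P) (msym Q) := by
  set α := (δ + mnorm (msym P)) ^ (p-2)
  set β := (δ + mnorm (msym Q)) ^ (p-2)
  have h0 : Smap p δ P - Smap p δ Q = α • msym P - β • msym Q := rfl
  rw [h0]
  have hsymm : (α • msym P - β • msym Q)ᵀ = α • msym P - β • msym Q := by
    rw [transpose_sub, transpose_smul, transpose_smul, msym_symm, msym_symm]
  rw [← mdot_msym _ _ hsymm, msym_sub, mdot_expand, mdot_sub_right, mdot_sub_right,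
    mdot_comm (msym Q) (msym P)]
  ring

lemma comp2 (p δ : ℝ) (P Q : Matrix (Fin d) (Fin d) ℝ) :
    mnorm (Fmap p δ P - Fmap p δ Q) ^ 2
      = ((δ + mnorm (msym P)) ^ ((p-2)/2)) ^ 2 * mdot (msym P) (msym P)
        + ((δ + mnorm (msym Q)) ^ ((p-2)/2)) ^ 2 * mdot (msym Q) (msym Q)
        - 2 * (((δ + mnorm (msym P)) ^ ((p-2)/2)) * ((δ + mnorm (msym Q)) ^ ((p-2)/2)))
            * mdot (msym P) (msym Q) := by
  set γ := (δ + mnorm (msym P)) ^ ((p-2)/2)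
  set η := (δ + mnorm (msym Q)) ^ ((p-2)/2)
  have h0 : Fmap p δ P - Fmap p δ Q = γ • msym P - η • msym Q := rfl
  rw [mnorm_sq, h0, mdot_expand, mdot_sub_right, mdot_sub_right,
    mdot_smul_right, mdot_smul_right, mdot_smul_right, mdot_smul_right,
    mdot_comm (msym Q) (msym P)]
  ring

lemma mainaux (p : ℝ) (hp : 1 < p) (δ : ℝ) (hδ : 0 ≤ δ) (P Q : Matrix (Fin d) (Fin d) ℝ)
    (hba : mnorm (msym Q) ≤ mnorm (msym P)) :
    min (1/2) (min 1 (p-1) / (max 1 (p/2))^2) * mnorm (Fmap p δ P - Fmap p δ Q) ^ 2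
      ≤ mdot (Smap p δ P - Smap p δ Q) (P - Q) ∧
    mdot (Smap p δ P - Smap p δ Q) (P - Q)
      ≤ max 3 (max 1 (p-1) / (min 1 (p/2))^2) * mnorm (Fmap p δ P - Fmap p δ Q) ^ 2 := by
  set a := mnorm (msym P) with hadef
  set b := mnorm (msym Q) with hbdef
  set s := mdot (msym P) (msym Q) with hsdef
  have hcs : |s| ≤ a * b := mdot_cauchy _ _
  have ha0 : 0 ≤ a := mnorm_nonneg (msym P)
  have hb0 : 0 ≤ b := mnorm_nonneg (msym Q)
  have hM := master p hp hδ (mnorm_nonneg (msym Q)) hba hcs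
  have hc1 : mdot (Smap p δ P - Smap p δ Q) (P - Q)
      = ((δ+a) ^ ((p-2)/2))^2*a^2 + ((δ+b) ^ ((p-2)/2))^2*b^2
        - (((δ+a) ^ ((p-2)/2))^2+((δ+b) ^ ((p-2)/2))^2)*s := by
    rw [comp1 p δ P Q, rpow_half_sq (by linarith : (0:ℝ) ≤ δ + a) (p-2),
      rpow_half_sq (by linarith : (0:ℝ) ≤ δ + b) (p-2),
      ← mnorm_sq (msym P), ← mnorm_sq (msym Q)]
  have hc2 : mnorm (Fmap p δ P - Fmap p δ Q) ^ 2
      = ((δ+a) ^ ((p-2)/2))^2*a^2 + ((δ+b) ^ ((p-2)/2))^2*b^2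
        - 2*((δ+a) ^ ((p-2)/2)*((δ+b) ^ ((p-2)/2)))*s := by
    rw [comp2 p δ P Q, ← mnorm_sq (msym P), ← mnorm_sq (msym Q)]
  rw [hc1, hc2]
  exact hM

lemma mdot_neg_neg (A B : Matrix (Fin d) (Fin d) ℝ) : mdot (-A) (-B) = mdot A B := by
  simp [mdot]

lemma mnorm_neg (A : Matrix (Fin d) (Fin d) ℝ) : mnorm (-A) = mnorm A := by
  unfold mnorm
  rw [mdot_neg_neg]

end matrixpart

/-- There are constants `c, C > 0` depending only on `p > 1` such that for all `δ ≥ 0`,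
all `d ≥ 1` and all real `d×d` matrices `P, Q`:
`c * |F(P) - F(Q)|² ≤ (S(P) - S(Q)):(P - Q) ≤ C * |F(P) - F(Q)|²`. -/
theorem stmt6 (p : ℝ) (hp : 1 < p) :
    ∃ c : ℝ, 0 < c ∧ ∃ C : ℝ, 0 < C ∧
      ∀ δ : ℝ, 0 ≤ δ → ∀ d : ℕ, 1 ≤ d → ∀ P Q : Matrix (Fin d) (Fin d) ℝ,
        c * mnorm (Fmap p δ P - Fmap p δ Q) ^ 2
            ≤ mdot (Smap p δ P - Smap p δ Q) (P - Q) ∧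
        mdot (Smap p δ P - Smap p δ Q) (P - Q)
            ≤ C * mnorm (Fmap p δ P - Fmap p δ Q) ^ 2 := by
  refine ⟨min (1/2) (min 1 (p-1) / (max 1 (p/2))^2), ?_,
    max 3 (max 1 (p-1) / (min 1 (p/2))^2), ?_, ?_⟩
  · apply lt_min
    · norm_num
    · apply div_pos (lt_min one_pos (by linarith))
      exact pow_pos (lt_of_lt_of_le one_pos (le_max_left _ _)) 2
  · exact lt_of_lt_of_le (by norm_num) (le_max_left _ _)
  · intro δ hδ d _ P Q
    rcases le_total (mnorm (msym Q)) (mnorm (msym P)) with hba | hba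
    · exact mainaux p hp δ hδ P Q hba
    · have h := mainaux p hp δ hδ Q P hba
      have eS : mdot (Smap p δ P - Smap p δ Q) (P - Q)
          = mdot (Smap p δ Q - Smap p δ P) (Q - P) := by
        rw [← mdot_neg_neg, neg_sub, neg_sub]
      have eF : mnorm (Fmap p δ P - Fmap p δ Q) = mnorm (Fmap p δ Q - Fmap p δ P) := by
        rw [← mnorm_neg, neg_sub]
      rw [eS, eF]
      exact h
end
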